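/- (Generalized BiHom-associativity.) Let (A, m, α, β) be a BiHom-semigroup. Define the iterated product P : A → List A → A by P x [] = x and P x (y :: l) = m (α^(l.length) x) (P y l), where α^k denotes the k-fold iterate of α. Then for all x y : A and zs : List A, P x (y :: zs) = P (m x y) (zs.map β). -/
import Mathlib


/-- A BiHom-semigroup structure on `A`. -/
def IsBiHomSemigroup {A : Type*} (m : A → A → A) (α β : A → A) : Prop :=
  α ∘ β = β ∘ α ∧
  (∀ x y, α (m x y) = m (α x) (α y)) ∧
  (∀ x y, β (m x y) = m (β x) (β y)) ∧
  (∀ x y z, m (m x y) (β z) = m (α x) (m y z))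

/-- A unital BiHom-monoid structure on `A`. -/
def IsUnitalBiHomMonoid {A : Type*} (m : A → A → A) (α β : A → A) (e : A) : Prop :=
  IsBiHomSemigroup m α β ∧
  α e = e ∧ β e = e ∧ (∀ x, m e x = β x) ∧ (∀ x, m x e = α x)

/-- Iterated BiHom-product: `P x [] = x`, `P x (y :: l) = m (α^[l.length] x) (P y l)`. -/
def iterProd {A : Type*} (m : A → A → A) (α : A → A) : A → List A → A
  | x, [] => x
  | x, y :: l => m (α^[l.length] x) (iterProd m α y l)

lemma beta_iterProd {A : Type*} (m : A → A → A) (α β : A → A)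
    (h : IsBiHomSemigroup m α β) :
    ∀ (l : List A) (x : A), β (iterProd m α x l) = iterProd m α (β x) (l.map β) := by
  obtain ⟨hc, hα, hβ, _⟩ := h
  have hcomm : ∀ (k : ℕ) (x : A), β (α^[k] x) = α^[k] (β x) := by
    intro k
    induction k with
    | zero => simp
    | succ n ih =>
      intro x
      rw [Function.iterate_succ_apply', Function.iterate_succ_apply',
        show β (α _) = α (β _) from congrFun hc.symm _, ih]
  intro l
  induction l with
  | nil => intro x; rfl
  | cons y l ih =>
    intro x
    simp only [iterProd, List.map, hβ, hcomm, ih, List.length_map]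

theorem stmt_12 {A : Type*} (m : A → A → A) (α β : A → A)
    (h : IsBiHomSemigroup m α β) :
    ∀ (x y : A) (zs : List A),
      iterProd m α x (y :: zs) = iterProd m α (m x y) (zs.map β) := by
  obtain ⟨hc, hα, hβ, hassoc⟩ := h
  have hαit : ∀ (k : ℕ) (x y : A), α^[k] (m x y) = m (α^[k] x) (α^[k] y) := by
    intro k
    induction k with
    | zero => intro x y; rfl
    | succ n ih =>
      intro x y
      rw [Function.iterate_succ_apply', Function.iterate_succ_apply',
        Function.iterate_succ_apply', ih, hα]
  intro x y zs
  cases zs with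
  | nil => simp [iterProd]
  | cons z l =>
    show m (α^[l.length + 1] x) (m (α^[l.length] y) (iterProd m α z l)) = _
    show _ = m (α^[(l.map β).length] (m x y)) (iterProd m α (β z) (l.map β))
    rw [List.length_map, ← beta_iterProd m α β ⟨hc, hα, hβ, hassoc⟩, hαit,
      hassoc, Function.iterate_succ_apply']
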